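/- Let A be a complex (d×d) block matrix partitioned as A = [[A_R, a_R, 0],[a_R^T, a_ss, a_V^T],[0, a_V, A_V]] with A_R of size (s-1)×(s-1) and A_V of size (d-s)×(d-s), both invertible, and a_ss ≠ 0. Suppose vectors x_R, x_s (scalar), x_V satisfy A·[x_R; x_s; x_V] = B_d f_d + B_a f_a where B_d = [0; 0; D_d] and B_a = [D_a; 0; 0]. If x_s = 0 and a_R^T A_R^{-1} D_a ≠ 0, then f_a = -(a_V^T A_V^{-1} D_d)(a_R^T A_R^{-1} D_a)^{-1} f_d. -/
import Mathlib


open Matrix Complex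

/-- Proposition 1 of the paper (case p < s < d): the block system
`A ⬝ [x_R; x_s; x_V] = B_d f_d + B_a f_a` written out row-block by row-block;
once the target mass is stopped (`x_s = 0`), the absorber force phasor is
uniquely determined. -/
theorem stmt_0 {n m : ℕ}
    (A_R : Matrix (Fin n) (Fin n) ℂ) (A_V : Matrix (Fin m) (Fin m) ℂ)
    (a_R D_a : Fin n → ℂ) (a_V D_d : Fin m → ℂ)
    (a_ss f_a f_d x_s : ℂ) (x_R : Fin n → ℂ) (x_V : Fin m → ℂ)
    (hA_R : IsUnit A_R.det) (hA_V : IsUnit A_V.det) (hss : a_ss ≠ 0)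
    (h1 : A_R *ᵥ x_R + x_s • a_R = f_a • D_a)
    (h2 : a_R ⬝ᵥ x_R + a_ss * x_s + a_V ⬝ᵥ x_V = 0)
    (h3 : x_s • a_V + A_V *ᵥ x_V = f_d • D_d)
    (hxs : x_s = 0)
    (hden : a_R ⬝ᵥ (A_R⁻¹ *ᵥ D_a) ≠ 0) :
    f_a = -(a_V ⬝ᵥ (A_V⁻¹ *ᵥ D_d)) * (a_R ⬝ᵥ (A_R⁻¹ *ᵥ D_a))⁻¹ * f_d := by
  subst hxs
  simp only [zero_smul, add_zero, mul_zero, zero_add] at h1 h2 h3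
  have hx_R : x_R = A_R⁻¹ *ᵥ (f_a • D_a) := by
    rw [← h1, mulVec_mulVec, Matrix.nonsing_inv_mul _ hA_R, one_mulVec]
  have hx_V : x_V = A_V⁻¹ *ᵥ (f_d • D_d) := by
    rw [← h3, mulVec_mulVec, Matrix.nonsing_inv_mul _ hA_V, one_mulVec]
  rw [hx_R, hx_V, mulVec_smul, mulVec_smul, dotProduct_smul, dotProduct_smul,
    smul_eq_mul, smul_eq_mul] at h2
  have hb : (a_R ⬝ᵥ (A_R⁻¹ *ᵥ D_a)) * (a_R ⬝ᵥ (A_R⁻¹ *ᵥ D_a))⁻¹ = 1 :=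
    mul_inv_cancel₀ hden
  linear_combination (a_R ⬝ᵥ (A_R⁻¹ *ᵥ D_a))⁻¹ * h2 - f_a * hb
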